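/- Let H be a locally compact Hausdorff group, S ⊆ H compact, normal (conjugation-invariant), and symmetric, and let f : G → H be a quasi-homomorphism with error set S from a group G generated by a symmetric set X with e ∈ X. Suppose for every compact V ⊆ H there is i with f⁻¹[V] ⊆ X^i, and cl(f[X]) is compact. Then for every relatively compact neighborhood U of the identity, the set Y := f⁻¹[U·S] satisfies: Y is covered by finitely many left translates of X and X is covered by finitely many left translates of Y (i.e., X and Y are commensurable). -/

import Mathlib

open Pointwise

theorem stmt17 {G H : Type*} [Group G] [Group H] [TopologicalSpace H] [IsTopologicalGroup H]
    [LocallyCompactSpace H] [T2Space H]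
    (X : Set G) (hX1 : (1 : G) ∈ X) (hXs : X⁻¹ = X)
    (hgen : Subgroup.closure X = ⊤)
    (hap : ∀ n : ℕ, ∃ F : Finset G, X ^ n ⊆ ↑F * X)
    (S : Set H) (hSc : IsCompact S) (hSs : S⁻¹ = S)
    (hSn : ∀ s ∈ S, ∀ h : H, h * s * h⁻¹ ∈ S)
    (f : G → H)
    (hfr : ∀ x y : G, (f y)⁻¹ * (f x)⁻¹ * f (x * y) ∈ S)
    (hfl : ∀ x y : G, f (x * y) * (f y)⁻¹ * (f x)⁻¹ ∈ S)
    (hpre : ∀ V : Set H, IsCompact V → ∃ i : ℕ, f ⁻¹' V ⊆ X ^ i)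
    (hfX : IsCompact (closure (f '' X))) :
    ∀ U : Set H, U ∈ nhds (1 : H) → IsCompact (closure U) →
      (∃ F : Finset G, f ⁻¹' (U * S) ⊆ ↑F * X) ∧
      (∃ F : Finset G, X ⊆ ↑F * (f ⁻¹' (U * S))) := by
  classical
  intro U hU hUc
  constructor
  · obtain ⟨i, hi⟩ := hpre (closure U * S) (hUc.mul hSc)
    obtain ⟨F, hF⟩ := hap i
    refine ⟨F, fun x hx => hF (hi ?_)⟩
    exact Set.preimage_mono (Set.mul_subset_mul_right subset_closure) hx
  · obtain ⟨V, hVo, hV1, hVU⟩ := exists_open_nhds_one_mul_subset hU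
    set W := V ∩ V⁻¹ with hWdef
    have hWo : IsOpen W := hVo.inter hVo.inv
    have hW1 : (1 : H) ∈ W := ⟨hV1, by simpa using hV1⟩
    have hWU : ∀ a ∈ W, ∀ b ∈ W, a⁻¹ * b ∈ U := by
      intro a ha b hb
      exact hVU (Set.mul_mem_mul (Set.mem_inv.mp ha.2) hb.1)
    have hcov : closure (f '' X) ⊆ ⋃ h : H, h • W := by
      intro k _
      exact Set.mem_iUnion.mpr ⟨k, ⟨1, hW1, mul_one k⟩⟩
    obtain ⟨T, hT⟩ := hfX.elim_finite_subcover (fun h : H => h • W)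
      (fun h => hWo.smul h) hcov
    let g : H → G := fun h => if hne : ∃ y ∈ X, f y ∈ h • W then hne.choose else 1
    refine ⟨T.image g, fun x hx => ?_⟩
    have hfx : f x ∈ closure (f '' X) := subset_closure ⟨x, hx, rfl⟩
    obtain ⟨h, hhT, hxh⟩ : ∃ h ∈ T, f x ∈ h • W := by
      simpa using hT hfx
    have hne : ∃ y ∈ X, f y ∈ h • W := ⟨x, hx, hxh⟩
    have hgX : g h ∈ X := by
      simp only [g, dif_pos hne]; exact hne.choose_spec.1
    have hgW : f (g h) ∈ h • W := by
      simp only [g, dif_pos hne]; exact hne.choose_spec.2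
    obtain ⟨w1, hw1, hw1e⟩ := hxh
    obtain ⟨w2, hw2, hw2e⟩ := hgW
    have hu : (f (g h))⁻¹ * f x ∈ U := by
      have : (f (g h))⁻¹ * f x = w2⁻¹ * w1 := by
        rw [← hw1e, ← hw2e]; simp only [smul_eq_mul]; group
      rw [this]
      exact hWU w2 hw2 w1 hw1
    have hs : (f ((g h)⁻¹ * x))⁻¹ * (f (g h))⁻¹ * f x ∈ S := by
      have := hfr (g h) ((g h)⁻¹ * x)
      rwa [mul_inv_cancel_left] at this
    have hsinv : ((f ((g h)⁻¹ * x))⁻¹ * (f (g h))⁻¹ * f x)⁻¹ ∈ S := by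
      rw [← hSs, Set.mem_inv, inv_inv]; exact hs
    have hY : f ((g h)⁻¹ * x) ∈ U * S := by
      refine Set.mem_mul.mpr ⟨(f (g h))⁻¹ * f x, hu,
        ((f ((g h)⁻¹ * x))⁻¹ * (f (g h))⁻¹ * f x)⁻¹, hsinv, by group⟩
    exact Set.mem_mul.mpr ⟨g h, Finset.mem_coe.mpr (Finset.mem_image_of_mem g hhT),
      (g h)⁻¹ * x, hY, by group⟩
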